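/- Let G be a group acting on the left on two sets Ω and P. Fix x ∈ Ω and α ∈ P, let S = Stab_G(x), H = Stab_G(α), and let Λ ⊆ G·x be an H-invariant subset. Define A = {g⁻¹·α : g ∈ G, g·x ∈ Λ}. Let S′ be a subgroup of S. If S′ has finitely many orbits on A, then H has finitely many orbits on Λ. -/
import Mathlib


/-- Let `G` act on two sets `Ω` and `P`, `S = Stab_G(x)`, `H = Stab_G(α)`,
`Λ ⊆ G·x` an `H`-invariant subset, `A = {g⁻¹·α : g ∈ G, g·x ∈ Λ}`, and `S′ ≤ S` a subgroup.
If `S′` has finitely many orbits on `A`, then `H` has finitely many orbits on `Λ`. -/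
theorem stmt5 {G Ω P : Type*} [Group G] [MulAction G Ω] [MulAction G P]
    (x : Ω) (α : P) (Λ : Set Ω) (hΛo : Λ ⊆ MulAction.orbit G x)
    (hΛinv : ∀ h ∈ MulAction.stabilizer G α, ∀ y ∈ Λ, h • y ∈ Λ)
    (S' : Subgroup G) (hS' : S' ≤ MulAction.stabilizer G x)
    (A : Set P) (hA : A = {b : P | ∃ g : G, g • x ∈ Λ ∧ b = g⁻¹ • α})
    (hfin : Finite (Quot (fun a a' : A => ∃ s ∈ S', s • (a : P) = (a' : P)))) :
    Finite (Quot (fun y y' : Λ =>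
      ∃ h ∈ MulAction.stabilizer G α, h • (y : Ω) = (y' : Ω))) := by
  classical
  have key : ∀ a : A, ∃ g : G, g • x ∈ Λ ∧ (a : P) = g⁻¹ • α := by
    intro a
    have h := a.2
    exact (hA ▸ h : (a : P) ∈ {b : P | ∃ g : G, g • x ∈ Λ ∧ b = g⁻¹ • α})
  choose g hg1 hg2 using key
  let F : A → Quot (fun y y' : Λ =>
      ∃ h ∈ MulAction.stabilizer G α, h • (y : Ω) = (y' : Ω)) :=
    fun a => Quot.mk _ ⟨g a • x, hg1 a⟩
  have hwd : ∀ a a' : A, (∃ s ∈ S', s • (a : P) = (a' : P)) → F a = F a' := by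
    rintro a a' ⟨s, hs, hsa⟩
    apply Quot.sound
    refine ⟨g a' * s * (g a)⁻¹, ?_, ?_⟩
    · have h1 : (g a)⁻¹ • α = (a : P) := (hg2 a).symm
      have h2 : (a' : P) = (g a')⁻¹ • α := hg2 a'
      have : (g a' * s * (g a)⁻¹) • α = α := by
        rw [mul_smul, mul_smul, h1, hsa, h2, smul_inv_smul]
      exact this
    · have hsx : s • x = x := hS' hs
      show (g a' * s * (g a)⁻¹) • (g a • x) = g a' • x
      rw [mul_smul, mul_smul, inv_smul_smul, hsx]
  let F' := Quot.lift F hwd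
  have hsurj : Function.Surjective F' := by
    intro q
    obtain ⟨y, rfl⟩ := Quot.exists_rep q
    obtain ⟨gy, hgy⟩ := MulAction.mem_orbit_iff.mp (hΛo y.2)
    have haA : (gy⁻¹ • α) ∈ A := by
      rw [hA]
      exact ⟨gy, by rw [hgy]; exact y.2, rfl⟩
    refine ⟨Quot.mk _ ⟨gy⁻¹ • α, haA⟩, ?_⟩
    apply Quot.sound
    set a : A := ⟨gy⁻¹ • α, haA⟩
    refine ⟨gy * (g a)⁻¹, ?_, ?_⟩
    · have h1 : (g a)⁻¹ • α = gy⁻¹ • α := (hg2 a).symm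
      have : (gy * (g a)⁻¹) • α = α := by
        rw [mul_smul, h1, smul_inv_smul]
      exact this
    · show (gy * (g a)⁻¹) • (g a • x) = (y : Ω)
      rw [mul_smul, inv_smul_smul, hgy]
  exact Finite.of_surjective F' hsurj
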